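/- For all x ∈ [0,1): ω₂(x) = −1 − β(x)·x + (5/2)(1 − t₁(x)); ω₃(x) = −1 + β(x)·x² − 5(1 − t₁(x))·x + (43/18)(1 − t₂(x)); and ω₄(x) = −1 − (2/3)β(x)·x³ + 5(1 − t₁(x))·x² − (43/9)(1 − t₂(x))·x + (701/294)(1 − t₃(x)) + β(x)·(S(x)/48 − 1/42), where S(x) := Σ_{a=0}^∞ wal_{2^a}(x) · 2^{−3a}. -/

import Mathlib

noncomputable def binDigit (ℓ : ℕ) (x : ℝ) : ℕ := (⌊(2 : ℝ) ^ ℓ * x⌋).toNat % 2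

noncomputable def walsh (k : ℕ) (x : ℝ) : ℝ :=
  (-1 : ℝ) ^ (∑ ℓ ∈ Finset.range (k + 1), (k / 2 ^ ℓ % 2) * binDigit (ℓ + 1) x)

def dickWeight (α k : ℕ) : ℕ :=
  (((((Finset.range (k + 1)).filter fun i => k / 2 ^ i % 2 = 1).sort (· ≤ ·)).reverse.take
        α).map (· + 1)).sum

noncomputable def omegaDick (α : ℕ) (x : ℝ) : ℝ :=
  ∑' k : ℕ, (2 : ℝ) ^ (-(dickWeight α (k + 1) : ℤ)) * walsh (k + 1) x

noncomputable def betaFn (x : ℝ) : ℤ := if x = 0 then 0 else -⌊Real.logb 2 x⌋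

noncomputable def tFn (ν : ℕ) (x : ℝ) : ℝ :=
  if x = 0 then 0 else (2 : ℝ) ^ (-(ν : ℤ) * betaFn x)

noncomputable def Sser (x : ℝ) : ℝ := ∑' a : ℕ, walsh (2 ^ a) x * (2 : ℝ) ^ (-(3 * (a : ℤ)))

namespace Aux

lemma bit_high {k i : ℕ} (hi : k < 2 ^ i) : k / 2 ^ i % 2 = 0 := by
  rw [Nat.div_eq_of_lt hi]

lemma bit_add {m k : ℕ} (hk : k < 2 ^ m) (ℓ : ℕ) :
    (2 ^ m + k) / 2 ^ ℓ % 2 = 2 ^ m / 2 ^ ℓ % 2 + k / 2 ^ ℓ % 2 := by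
  rcases lt_trichotomy ℓ m with h | rfl | h
  · have h2 : (2:ℕ) ^ m = 2 ^ (m - ℓ) * 2 ^ ℓ := by
      rw [← pow_add]; congr 1; omega
    have hml : 1 ≤ m - ℓ := by omega
    have e1 : (2 ^ m + k) / 2 ^ ℓ = k / 2 ^ ℓ + 2 ^ (m - ℓ) := by
      rw [h2, add_comm, Nat.add_mul_div_right _ _ (Nat.two_pow_pos ℓ)]
    have e2 : (2:ℕ) ^ m / 2 ^ ℓ = 2 ^ (m - ℓ) := by
      rw [h2, Nat.mul_div_cancel _ (Nat.two_pow_pos ℓ)]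
    have h3 : (2:ℕ) ^ (m - ℓ) % 2 = 0 := by
      have : (2:ℕ) ^ (m - ℓ) = 2 * 2 ^ (m - ℓ - 1) := by
        rw [← pow_succ']; congr 1; omega
      omega
    rw [e1, e2]
    omega
  · have e1 : (2 ^ ℓ + k) / 2 ^ ℓ = 1 + k / 2 ^ ℓ := by
      rw [add_comm, Nat.add_div_right _ (Nat.two_pow_pos ℓ), add_comm]
    rw [e1, Nat.div_eq_of_lt hk, Nat.div_self (Nat.two_pow_pos ℓ)]
  · have h1 : 2 ^ m + k < 2 ^ ℓ := by
      calc 2 ^ m + k < 2 ^ m + 2 ^ m := by omega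
      _ = 2 ^ (m + 1) := by ring
      _ ≤ 2 ^ ℓ := Nat.pow_le_pow_right (by norm_num) (by omega)
    rw [bit_high h1, bit_high (lt_of_le_of_lt (Nat.le_add_right _ k) h1),
      bit_high (lt_of_lt_of_le hk (Nat.pow_le_pow_right (by norm_num) (le_of_lt h)))]

lemma walsh_ext {x : ℝ} {n L : ℕ} (h : n < L) :
    walsh n x = (-1 : ℝ) ^ (∑ ℓ ∈ Finset.range L, (n / 2 ^ ℓ % 2) * binDigit (ℓ + 1) x) := by
  unfold walsh
  congr 1
  refine Finset.sum_subset (Finset.range_subset_range.mpr h) ?_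
  intro ℓ _ hℓ
  have hn : n < 2 ^ ℓ := by
    have : n + 1 ≤ ℓ := by simpa using hℓ
    calc n < 2 ^ n := Nat.lt_two_pow_self
    _ ≤ 2 ^ ℓ := Nat.pow_le_pow_right (by norm_num) (by omega)
  rw [bit_high hn, zero_mul]

lemma walsh_split {x : ℝ} {m k : ℕ} (hk : k < 2 ^ m) :
    walsh (2 ^ m + k) x = walsh (2 ^ m) x * walsh k x := by
  have h1 : 2 ^ m + k < 2 ^ m + k + 1 := Nat.lt_succ_self _
  have h2 : 2 ^ m < 2 ^ m + k + 1 := by omega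
  have h3 : k < 2 ^ m + k + 1 := by omega
  rw [walsh_ext h1, walsh_ext (x := x) h2, walsh_ext (x := x) h3, ← pow_add]
  congr 1
  rw [← Finset.sum_add_distrib]
  refine Finset.sum_congr rfl fun ℓ _ => ?_
  rw [bit_add hk ℓ, add_mul]

lemma walsh_two_pow {x : ℝ} {m : ℕ} :
    walsh (2 ^ m) x = (-1 : ℝ) ^ binDigit (m + 1) x := by
  have h : m < 2 ^ m + 1 := by have : m < 2 ^ m := Nat.lt_two_pow_self; omega
  rw [walsh_ext (lt_of_le_of_lt (Nat.le_refl _) (Nat.lt_succ_self _))]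
  congr 1
  rw [Finset.sum_eq_single_of_mem m (Finset.mem_range.mpr h)]
  · rw [Nat.div_self (Nat.two_pow_pos m)]
    omega
  · intro ℓ _ hℓ
    rcases lt_or_gt_of_ne hℓ with h' | h'
    · have : (2:ℕ) ^ m / 2 ^ ℓ % 2 = 0 := by
        have e2 : (2:ℕ) ^ m = 2 ^ (m - ℓ) * 2 ^ ℓ := by rw [← pow_add]; congr 1; omega
        have : (2:ℕ) ^ m / 2 ^ ℓ = 2 ^ (m - ℓ) := by
          rw [e2, Nat.mul_div_cancel _ (Nat.two_pow_pos ℓ)]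
        rw [this]
        have : (2:ℕ) ^ (m - ℓ) = 2 * 2 ^ (m - ℓ - 1) := by
          rw [← pow_succ']; congr 1; omega
        omega
      rw [this, zero_mul]
    · rw [bit_high (Nat.pow_lt_pow_right (by norm_num) h'), zero_mul]

lemma walsh_zero {x : ℝ} : walsh 0 x = 1 := by
  unfold walsh
  norm_num

end Aux

lemma dw_zero {α : ℕ} : dickWeight α 0 = 0 := by
  unfold dickWeight
  have : (Finset.range 1).filter (fun i => 0 / 2 ^ i % 2 = 1) = ∅ := by
    ext i; simp
  rw [this]
  simp

lemma dw_zero_weight {k : ℕ} : dickWeight 0 k = 0 := by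
  unfold dickWeight
  simp

lemma sort_max {s : Finset ℕ} {m : ℕ} (h : ∀ i ∈ s, i < m) :
    (insert m s).sort (· ≤ ·) = s.sort (· ≤ ·) ++ [m] := by
  have hm : m ∉ s := fun hc => absurd (h m hc) (lt_irrefl m)
  refine List.Perm.eq_of_pairwise' (Finset.pairwise_sort _ _) ?_ ?_
  swap
  · exact ((Finset.sort_perm_toList _ _).trans
      ((Finset.toList_insert hm).trans
        ((List.Perm.cons m (Finset.sort_perm_toList _ _).symm).trans
          (List.perm_append_singleton _ _).symm)))
  · rw [List.pairwise_append]
    refine ⟨Finset.pairwise_sort _ _, List.pairwise_singleton _ _, ?_⟩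
    intro a ha b hb
    rw [List.mem_singleton] at hb
    subst hb
    exact le_of_lt (h a ((Finset.mem_sort _).mp ha))

lemma exps_eq {m k : ℕ} (hk : k < 2 ^ m) :
    (Finset.range (2 ^ m + k + 1)).filter (fun i => (2 ^ m + k) / 2 ^ i % 2 = 1) =
      insert m ((Finset.range (k + 1)).filter fun i => k / 2 ^ i % 2 = 1) := by
  ext i
  simp only [Finset.mem_filter, Finset.mem_range, Finset.mem_insert]
  constructor
  · rintro ⟨hi, hbit⟩
    rw [Aux.bit_add hk i] at hbit
    rcases lt_trichotomy i m with h' | rfl | h'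
    · right
      have h2m : (2:ℕ) ^ m / 2 ^ i % 2 = 0 := by
        have e2 : (2:ℕ) ^ m = 2 ^ (m - i) * 2 ^ i := by rw [← pow_add]; congr 1; omega
        have ed : (2:ℕ) ^ m / 2 ^ i = 2 ^ (m - i) := by
          rw [e2, Nat.mul_div_cancel _ (Nat.two_pow_pos i)]
        rw [ed]
        have : (2:ℕ) ^ (m - i) = 2 * 2 ^ (m - i - 1) := by rw [← pow_succ']; congr 1; omega
        omega
      rw [h2m, zero_add] at hbit
      have hle : 2 ^ i ≤ k := by
        by_contra hc
        rw [Aux.bit_high (by omega)] at hbit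
        exact absurd hbit (by norm_num)
      have : i < 2 ^ i := Nat.lt_two_pow_self
      exact ⟨by omega, hbit⟩
    · exact Or.inl rfl
    · exfalso
      rw [Aux.bit_high (Nat.pow_lt_pow_right (by norm_num) h'),
        Aux.bit_high (lt_of_lt_of_le hk (Nat.pow_le_pow_right (by norm_num) h'.le))] at hbit
      exact absurd hbit (by norm_num)
  · intro h
    rw [Aux.bit_add hk i]
    rcases h with hEq | ⟨hi, hbit⟩
    · subst hEq
      constructor
      · have : i < 2 ^ i := Nat.lt_two_pow_self
        omega
      · rw [Nat.div_self (Nat.two_pow_pos i), Aux.bit_high hk]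
    · have him : i < m := by
        by_contra hc
        rw [Aux.bit_high (lt_of_lt_of_le hk (Nat.pow_le_pow_right (by norm_num) (by omega)))] at hbit
        exact absurd hbit (by norm_num)
      have h2m : (2:ℕ) ^ m / 2 ^ i % 2 = 0 := by
        have e2 : (2:ℕ) ^ m = 2 ^ (m - i) * 2 ^ i := by rw [← pow_add]; congr 1; omega
        have ed : (2:ℕ) ^ m / 2 ^ i = 2 ^ (m - i) := by
          rw [e2, Nat.mul_div_cancel _ (Nat.two_pow_pos i)]
        rw [ed]
        have : (2:ℕ) ^ (m - i) = 2 * 2 ^ (m - i - 1) := by rw [← pow_succ']; congr 1; omega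
        omega
      exact ⟨by omega, by omega⟩

lemma dickWeight_succ {α m k : ℕ} (hk : k < 2 ^ m) :
    dickWeight (α + 1) (2 ^ m + k) = (m + 1) + dickWeight α k := by
  unfold dickWeight
  rw [exps_eq hk]
  have hlt : ∀ i ∈ (Finset.range (k + 1)).filter (fun i => k / 2 ^ i % 2 = 1), i < m := by
    intro i hi
    rw [Finset.mem_filter] at hi
    by_contra hc
    rw [Aux.bit_high (lt_of_lt_of_le hk (Nat.pow_le_pow_right (by norm_num) (by omega)))] at hi
    exact absurd hi.2 (by norm_num)
  rw [sort_max hlt, List.reverse_append]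
  simp only [List.reverse_singleton, List.singleton_append, List.take_succ_cons,
    List.map_cons, List.sum_cons]

noncomputable def SS (α : ℕ) (x : ℝ) (m : ℕ) : ℝ :=
  ∑ k ∈ Finset.range (2 ^ m), (2 : ℝ) ^ (-(dickWeight α k : ℤ)) * walsh k x

open Aux in
lemma zpow_neg_nat (m : ℕ) : (2:ℝ) ^ (-(m:ℤ)) = (2⁻¹ : ℝ) ^ m := by
  rw [zpow_neg, zpow_natCast, ← inv_pow]

open Aux

lemma SS_zero_m {α : ℕ} {x : ℝ} : SS α x 0 = 1 := by
  unfold SS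
  rw [pow_zero, Finset.sum_range_one, dw_zero, walsh_zero]
  norm_num

lemma SS_rec {α : ℕ} {x : ℝ} {m : ℕ} :
    SS (α + 1) x (m + 1) =
      SS (α + 1) x m + (2⁻¹:ℝ) ^ (m+1) * walsh (2 ^ m) x * SS α x m := by
  unfold SS
  rw [pow_succ, mul_two, Finset.sum_range_add]
  congr 1
  rw [Finset.mul_sum]
  refine Finset.sum_congr rfl fun k hk => ?_
  rw [Finset.mem_range] at hk
  rw [dickWeight_succ hk, walsh_split hk]
  push_cast
  rw [neg_add, zpow_add₀ (by norm_num : (2:ℝ) ≠ 0)]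
  rw [show (-(m+1:ℤ)) = -((m+1:ℕ):ℤ) by push_cast; ring, zpow_neg_nat (m+1)]
  ring

lemma SS0_rec {x : ℝ} {m : ℕ} :
    SS 0 x (m + 1) = (1 + walsh (2 ^ m) x) * SS 0 x m := by
  unfold SS
  rw [pow_succ, mul_two, Finset.sum_range_add]
  have h0 : ∀ k, dickWeight 0 k = 0 := fun k => dw_zero_weight
  have e1 : ∀ (k : ℕ), k ∈ Finset.range (2^m) →
      (2:ℝ) ^ (-(dickWeight 0 (2^m + k) : ℤ)) * walsh (2^m + k) x
        = walsh (2^m) x * ((2:ℝ) ^ (-(dickWeight 0 k : ℤ)) * walsh k x) := by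
    intro k hk
    rw [Finset.mem_range] at hk
    rw [h0, h0, walsh_split hk]
    norm_num
  rw [Finset.sum_congr rfl e1, ← Finset.mul_sum]
  ring

section Digits
variable {x : ℝ}

lemma floor_zero' (hx0 : 0 ≤ x) (hx1 : x < 1) : ⌊(2:ℝ)^(0:ℕ) * x⌋ = 0 := by
  rw [pow_zero, one_mul]
  exact Int.floor_eq_zero_iff.mpr ⟨hx0, hx1⟩

lemma floor_nonneg' (hx0 : 0 ≤ x) (m : ℕ) : 0 ≤ ⌊(2:ℝ)^m * x⌋ :=
  Int.floor_nonneg.mpr (mul_nonneg (by positivity) hx0)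

lemma binDigit_le_one (m : ℕ) : binDigit m x ≤ 1 := by
  unfold binDigit
  omega

lemma floor_rec (hx0 : 0 ≤ x) (m : ℕ) :
    ⌊(2:ℝ)^(m+1) * x⌋ = 2 * ⌊(2:ℝ)^m * x⌋ + (binDigit (m+1) x : ℤ) := by
  have h1 : 2 * ⌊(2:ℝ)^m * x⌋ ≤ ⌊(2:ℝ)^(m+1) * x⌋ := by
    rw [Int.le_floor]
    push_cast
    have := Int.floor_le ((2:ℝ)^m * x)
    calc (2:ℝ) * ⌊(2:ℝ)^m * x⌋ ≤ 2 * ((2:ℝ)^m * x) := by linarith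
    _ = (2:ℝ)^(m+1) * x := by ring
  have h2 : ⌊(2:ℝ)^(m+1) * x⌋ < 2 * ⌊(2:ℝ)^m * x⌋ + 2 := by
    rw [Int.floor_lt]
    push_cast
    have := Int.lt_floor_add_one ((2:ℝ)^m * x)
    calc (2:ℝ)^(m+1) * x = 2 * ((2:ℝ)^m * x) := by ring
    _ < 2 * (⌊(2:ℝ)^m * x⌋ + 1) := by linarith
    _ = 2 * ⌊(2:ℝ)^m * x⌋ + 2 := by ring
  have h3 : (binDigit (m+1) x : ℤ) = ⌊(2:ℝ)^(m+1) * x⌋ % 2 := by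
    unfold binDigit
    have h4 := floor_nonneg' hx0 (m+1)
    push_cast
    rw [Int.toNat_of_nonneg h4]
  omega

lemma walsh_pm {m : ℕ} : walsh (2^m) x = 1 - 2 * (binDigit (m+1) x : ℝ) := by
  rw [walsh_two_pow]
  have := binDigit_le_one (x := x) (m+1)
  interval_cases h : binDigit (m+1) x <;> norm_num

lemma SS0_closed (hx0 : 0 ≤ x) (hx1 : x < 1) (m : ℕ) :
    SS 0 x m = if ⌊(2:ℝ)^m * x⌋ = 0 then ((2:ℝ)^m) else 0 := by
  induction m with
  | zero => rw [SS_zero_m, floor_zero' hx0 hx1]; norm_num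
  | succ m ih =>
    rw [SS0_rec, ih, walsh_pm, floor_rec hx0 m]
    have hd := binDigit_le_one (x := x) (m+1)
    have hN := floor_nonneg' hx0 m
    by_cases h1 : ⌊(2:ℝ)^m * x⌋ = 0
    · by_cases h2 : binDigit (m+1) x = 0
      · rw [if_pos (by omega), h1, h2]
        push_cast
        ring
      · have h2' : binDigit (m+1) x = 1 := by omega
        rw [if_pos h1, if_neg (by omega), h2']
        push_cast
        ring
    · rw [if_neg h1, if_neg (by omega)]
      ring
end Digits

lemma phase1 {x : ℝ} (hx0 : 0 ≤ x) (hx1 : x < 1) :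
    ∀ m : ℕ, ⌊(2:ℝ)^m * x⌋ = 0 →
    SS 1 x m = 1 + m/2 ∧
    SS 2 x m = 5/2 - (3/2 + m/2) * (2⁻¹:ℝ)^m ∧
    SS 3 x m = 43/18 - 5/2 * (2⁻¹:ℝ)^m + (10/9 + m/3) * ((2⁻¹:ℝ)^m)^2 ∧
    SS 4 x m = 701/294 - 43/18 * (2⁻¹:ℝ)^m + 5/3 * ((2⁻¹:ℝ)^m)^2
      - (292/441 + 4*m/21) * ((2⁻¹:ℝ)^m)^3 := by
  intro m
  induction m with
  | zero =>
    intro _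
    refine ⟨?_, ?_, ?_, ?_⟩ <;> (rw [SS_zero_m]; norm_num)
  | succ m ih =>
    intro h
    have hN := floor_nonneg' hx0 m
    have hd := binDigit_le_one (x := x) (m+1)
    have hrec := floor_rec hx0 m
    have hN0 : ⌊(2:ℝ)^m * x⌋ = 0 := by omega
    have hd0 : binDigit (m+1) x = 0 := by omega
    obtain ⟨e1, e2, e3, e4⟩ := ih hN0
    have hw : walsh (2^m) x = 1 := by rw [walsh_pm, hd0]; norm_num
    have e0 : SS 0 x m = 2^m := by rw [SS0_closed hx0 hx1, if_pos hN0]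
    have hum : (2⁻¹:ℝ)^m * 2^m = 1 := by rw [← mul_pow]; norm_num
    refine ⟨?_, ?_, ?_, ?_⟩
    · rw [SS_rec, e0, hw, e1]
      push_cast
      linear_combination (1/2) * hum
    · rw [SS_rec, e1, hw, e2]
      push_cast
      ring
    · rw [SS_rec, e2, hw, e3]
      push_cast
      ring
    · rw [SS_rec, e3, hw, e4]
      push_cast
      ring

noncomputable def PP (x : ℝ) (m : ℕ) : ℝ :=
  ∑ ℓ ∈ Finset.range m, (binDigit (ℓ+1) x : ℝ) * ((2⁻¹:ℝ)^(ℓ+1))^3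

lemma phase2 {x : ℝ} (hx0 : 0 ≤ x) (hx1 : x < 1) (b : ℕ) (hb1 : 1 ≤ b)
    (hlb : (2⁻¹:ℝ)^b ≤ x) (hub : x < 2 * (2⁻¹:ℝ)^b) :
    ∀ m : ℕ, b ≤ m →
    SS 1 x m = b/2 ∧
    SS 2 x m = 5/2*(1-(2⁻¹:ℝ)^b) - b * ((⌊(2:ℝ)^m * x⌋ : ℝ) * (2⁻¹:ℝ)^m)
      - b/2 * (2⁻¹:ℝ)^m ∧
    SS 3 x m = b * ((⌊(2:ℝ)^m * x⌋ : ℝ) * (2⁻¹:ℝ)^m)^2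
      - 2*(5/2*(1-(2⁻¹:ℝ)^b)) * ((⌊(2:ℝ)^m * x⌋ : ℝ) * (2⁻¹:ℝ)^m)
      + b * (2⁻¹:ℝ)^m * ((⌊(2:ℝ)^m * x⌋ : ℝ) * (2⁻¹:ℝ)^m)
      - (5/2*(1-(2⁻¹:ℝ)^b)) * (2⁻¹:ℝ)^m
      + b/3 * ((2⁻¹:ℝ)^m)^2 + 43/18*(1-((2⁻¹:ℝ)^b)^2) ∧
    SS 4 x m = -(2*b/3) * ((⌊(2:ℝ)^m * x⌋ : ℝ) * (2⁻¹:ℝ)^m)^3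
      + 2*(5/2*(1-(2⁻¹:ℝ)^b)) * ((⌊(2:ℝ)^m * x⌋ : ℝ) * (2⁻¹:ℝ)^m)^2
      - 2*(43/18*(1-((2⁻¹:ℝ)^b)^2)) * ((⌊(2:ℝ)^m * x⌋ : ℝ) * (2⁻¹:ℝ)^m)
      - b/3 * PP x m
      - b * (2⁻¹:ℝ)^m * ((⌊(2:ℝ)^m * x⌋ : ℝ) * (2⁻¹:ℝ)^m)^2
      + 2*(5/2*(1-(2⁻¹:ℝ)^b)) * (2⁻¹:ℝ)^m * ((⌊(2:ℝ)^m * x⌋ : ℝ) * (2⁻¹:ℝ)^m)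
      - (43/18*(1-((2⁻¹:ℝ)^b)^2)) * (2⁻¹:ℝ)^m
      - (2*b/3) * ((2⁻¹:ℝ)^m)^2 * ((⌊(2:ℝ)^m * x⌋ : ℝ) * (2⁻¹:ℝ)^m)
      + (2*(5/2*(1-(2⁻¹:ℝ)^b))/3) * ((2⁻¹:ℝ)^m)^2
      - (4*b/21) * ((2⁻¹:ℝ)^m)^3 + 701/294*(1-((2⁻¹:ℝ)^b)^3) := by
  obtain ⟨c, rfl⟩ : ∃ c, b = c + 1 := ⟨b - 1, by omega⟩
  have NLow : ∀ m : ℕ, m < c + 1 → ⌊(2:ℝ)^m * x⌋ = 0 := by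
    intro m hm
    rw [Int.floor_eq_zero_iff]
    constructor
    · exact mul_nonneg (by positivity) hx0
    · have h1 : (2:ℝ)^m * x < 2^m * (2 * (2⁻¹:ℝ)^(c+1)) :=
        mul_lt_mul_of_pos_left hub (by positivity)
    
      have h2 : (2:ℝ)^m * (2 * (2⁻¹:ℝ)^(c+1)) = (2⁻¹:ℝ)^(c - m) := by
        have hcm : c + 1 = (m + 1) + (c - m) := by omega
        rw [hcm, pow_add]
        rw [show ((2:ℝ)⁻¹)^(m+1) = (2⁻¹)^m * 2⁻¹ by ring]
        rw [show ((2:ℝ))^m * (2 * ((2⁻¹:ℝ)^m * 2⁻¹ * (2⁻¹:ℝ)^(c-m)))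
            = (2 * 2⁻¹) * ((2:ℝ)^m * (2⁻¹:ℝ)^m) * (2⁻¹:ℝ)^(c-m) by ring,
          ← mul_pow]
        norm_num
      have h3 : ((2:ℝ)⁻¹)^(c - m) ≤ 1 := pow_le_one₀ (by norm_num) (by norm_num)
      linarith
  have Nb : ⌊(2:ℝ)^(c+1) * x⌋ = 1 := by
    have h1 : (1:ℝ) ≤ (2:ℝ)^(c+1) * x := by
      have := mul_le_mul_of_nonneg_left hlb (le_of_lt (show (0:ℝ) < 2^(c+1) by positivity))
      calc (1:ℝ) = 2^(c+1) * (2⁻¹:ℝ)^(c+1) := by rw [← mul_pow]; norm_num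
      _ ≤ 2^(c+1) * x := this
    have h2 : (2:ℝ)^(c+1) * x < 2 := by
      have := mul_lt_mul_of_pos_left hub (show (0:ℝ) < 2^(c+1) by positivity)
      calc (2:ℝ)^(c+1) * x < 2^(c+1) * (2 * (2⁻¹:ℝ)^(c+1)) := this
      _ = 2 * (2^(c+1) * (2⁻¹:ℝ)^(c+1)) := by ring
      _ = 2 := by rw [← mul_pow]; norm_num
    rw [Int.floor_eq_iff]
    push_cast
    exact ⟨h1, by linarith⟩
  have Npos : ∀ m : ℕ, c + 1 ≤ m → 1 ≤ ⌊(2:ℝ)^m * x⌋ := by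
    intro m hm
    rw [Int.le_floor]
    push_cast
    calc (1:ℝ) = 2^(c+1) * (2⁻¹:ℝ)^(c+1) := by rw [← mul_pow]; norm_num
    _ ≤ 2^(c+1) * x := mul_le_mul_of_nonneg_left hlb (by positivity)
    _ ≤ 2^m * x := mul_le_mul_of_nonneg_right (pow_le_pow_right₀ (by norm_num) hm) hx0
  have dig0 : ∀ ℓ : ℕ, ℓ + 1 < c + 1 → binDigit (ℓ+1) x = 0 := by
    intro ℓ hℓ
    have h1 := floor_rec hx0 ℓ
    have h2 := NLow (ℓ+1) hℓ
    have h3 := NLow ℓ (by omega)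
    omega
  have digb : binDigit (c+1) x = 1 := by
    have h1 := floor_rec hx0 c
    have h3 := NLow c (by omega)
    omega
  intro m hm
  induction m, hm using Nat.le_induction with
  | base =>
    have hNc := NLow c (by omega)
    obtain ⟨e1, e2, e3, e4⟩ := phase1 hx0 hx1 c hNc
    have e0 : SS 0 x c = 2^c := by rw [SS0_closed hx0 hx1, if_pos hNc]
    have hw : walsh (2^c) x = -1 := by rw [walsh_pm, digb]; norm_num
    have hum : (2⁻¹:ℝ)^c * 2^c = 1 := by rw [← mul_pow]; norm_num
    have hXb : ((⌊(2:ℝ)^(c+1) * x⌋ : ℤ) : ℝ) = 1 := by rw [Nb]; norm_num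
    have hP3 : PP x (c+1) = ((2⁻¹:ℝ)^(c+1))^3 := by
      unfold PP
      rw [Finset.sum_range_succ, digb]
      have : ∀ ℓ ∈ Finset.range c, (binDigit (ℓ+1) x : ℝ) * ((2⁻¹:ℝ)^(ℓ+1))^3 = 0 := by
        intro ℓ hℓ
        rw [Finset.mem_range] at hℓ
        rw [dig0 ℓ (by omega)]
        norm_num
      rw [Finset.sum_congr rfl this]
      simp
    refine ⟨?_, ?_, ?_, ?_⟩
    · rw [SS_rec, e1, hw, e0]
      push_cast
      linear_combination (-(1:ℝ)/2) * hum
    · rw [SS_rec, e2, hw, e1, hXb]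
      push_cast
      ring
    · rw [SS_rec, e3, hw, e2, hXb]
      push_cast
      ring
    · rw [SS_rec, e4, hw, e3, hXb, hP3]
      push_cast
      ring
  | succ m hm ih =>
    obtain ⟨f1, f2, f3, f4⟩ := ih
    have hd := binDigit_le_one (x := x) (m+1)
    have hS0 : SS 0 x m = 0 := by
      rw [SS0_closed hx0 hx1, if_neg (by have := Npos m hm; omega)]
    have hw : walsh (2^m) x = 1 - 2 * (binDigit (m+1) x : ℝ) := walsh_pm
    have hfloor : ((⌊(2:ℝ)^(m+1) * x⌋ : ℤ) : ℝ)
        = 2 * ((⌊(2:ℝ)^m * x⌋ : ℤ) : ℝ) + (binDigit (m+1) x : ℝ) := by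
      rw [floor_rec hx0 m]
      push_cast
      ring
    have hP3 : PP x (m+1) = PP x m + (binDigit (m+1) x : ℝ) * ((2⁻¹:ℝ)^(m+1))^3 := by
      unfold PP
      rw [Finset.sum_range_succ]
    have hcase : binDigit (m+1) x = 0 ∨ binDigit (m+1) x = 1 := by omega
    refine ⟨?_, ?_, ?_, ?_⟩
    · rw [SS_rec, f1, hw, hS0]
      ring
    · rw [SS_rec, f2, hw, f1, hfloor]
      rcases hcase with h | h <;> rw [h] <;> push_cast <;> ring
    · rw [SS_rec, f3, hw, f2, hfloor]
      rcases hcase with h | h <;> rw [h] <;> push_cast <;> ring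
    · rw [SS_rec, f4, hw, f3, hfloor, hP3]
      rcases hcase with h | h <;> rw [h] <;> push_cast <;> ring

noncomputable def GG (α : ℕ) (m : ℕ) : ℝ :=
  ∑ k ∈ Finset.range (2 ^ m), (2 : ℝ) ^ (-(dickWeight α k : ℤ))

lemma GG_zero_m {α : ℕ} : GG α 0 = 1 := by
  unfold GG
  rw [pow_zero, Finset.sum_range_one, dw_zero]
  norm_num

lemma GG_rec {α m : ℕ} :
    GG (α + 1) (m + 1) = GG (α + 1) m + (2⁻¹:ℝ) ^ (m+1) * GG α m := by
  unfold GG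
  rw [pow_succ, mul_two, Finset.sum_range_add]
  congr 1
  rw [Finset.mul_sum]
  refine Finset.sum_congr rfl fun k hk => ?_
  rw [Finset.mem_range] at hk
  rw [dickWeight_succ hk]
  push_cast
  rw [neg_add, zpow_add₀ (by norm_num : (2:ℝ) ≠ 0)]
  rw [show (-(m+1:ℤ)) = -((m+1:ℕ):ℤ) by push_cast; ring, zpow_neg_nat (m+1)]

lemma GG0 {m : ℕ} : GG 0 m = 2 ^ m := by
  unfold GG
  have : ∀ k ∈ Finset.range (2^m), (2:ℝ) ^ (-(dickWeight 0 k : ℤ)) = 1 := by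
    intro k _
    rw [dw_zero_weight]
    norm_num
  rw [Finset.sum_congr rfl this, Finset.sum_const, Finset.card_range]
  simp

lemma GG1 {m : ℕ} : GG 1 m = 1 + m / 2 := by
  induction m with
  | zero => rw [GG_zero_m]; norm_num
  | succ m ih =>
    rw [GG_rec, ih, GG0]
    have hum : (2⁻¹:ℝ)^m * 2^m = 1 := by rw [← mul_pow]; norm_num
    push_cast
    linear_combination (1/2) * hum

lemma GG2 {m : ℕ} : GG 2 m ≤ 3 - (m + 4) * (2⁻¹:ℝ)^(m+1) := by
  induction m with
  | zero => rw [GG_zero_m]; norm_num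
  | succ m ih =>
    rw [GG_rec, GG1]
    have h : (0:ℝ) < (2⁻¹:ℝ)^(m+1) := by positivity
    have key : (2⁻¹:ℝ)^(m+2) = (2⁻¹:ℝ)^(m+1) * 2⁻¹ := by ring
    push_cast
    push_cast at ih
    nlinarith [h]

lemma GG3 {m : ℕ} : GG 3 m ≤ 4 - 3 * (2⁻¹:ℝ)^m := by
  induction m with
  | zero => rw [GG_zero_m]; norm_num
  | succ m ih =>
    rw [GG_rec]
    norm_num
    have h2 := GG2 (m := m)
    have h : (0:ℝ) < (2⁻¹:ℝ)^(m+1) := by positivity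
    have hm : (0:ℝ) ≤ (m:ℝ) := by positivity
    have key : (2⁻¹:ℝ)^m = 2 * (2⁻¹:ℝ)^(m+1) := by ring
    nlinarith [mul_le_mul_of_nonneg_left h2 h.le, mul_nonneg (mul_nonneg hm h.le) h.le]

lemma GG4 {m : ℕ} : GG 4 m ≤ 5 - 4 * (2⁻¹:ℝ)^m := by
  induction m with
  | zero => rw [GG_zero_m]; norm_num
  | succ m ih =>
    rw [GG_rec]
    norm_num
    have h3 := GG3 (m := m)
    have h : (0:ℝ) < (2⁻¹:ℝ)^(m+1) := by positivity
    have key : (2⁻¹:ℝ)^m = 2 * (2⁻¹:ℝ)^(m+1) := by ring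
    nlinarith [mul_le_mul_of_nonneg_left h3 h.le]

lemma abs_walsh {k : ℕ} {x : ℝ} : |walsh k x| = 1 := by
  unfold walsh
  rw [abs_pow, abs_neg, abs_one, one_pow]

lemma summable_dick {x : ℝ} (α : ℕ) (C : ℝ) (hC : ∀ m, GG α m ≤ C) :
    Summable (fun k => (2:ℝ) ^ (-(dickWeight α k : ℤ)) * walsh k x) := by
  rw [← summable_abs_iff]
  apply summable_of_sum_range_le (c := C)
  · intro n
    positivity
  · intro n
    have h1 : ∀ k : ℕ, |(2:ℝ) ^ (-(dickWeight α k : ℤ)) * walsh k x|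
        = (2:ℝ) ^ (-(dickWeight α k : ℤ)) := by
      intro k
      rw [abs_mul, abs_walsh, mul_one, abs_of_pos (by positivity)]
    calc ∑ k ∈ Finset.range n, |(2:ℝ) ^ (-(dickWeight α k : ℤ)) * walsh k x|
        = ∑ k ∈ Finset.range n, (2:ℝ) ^ (-(dickWeight α k : ℤ)) :=
          Finset.sum_congr rfl fun k _ => h1 k
      _ ≤ ∑ k ∈ Finset.range (2^n), (2:ℝ) ^ (-(dickWeight α k : ℤ)) := by
          apply Finset.sum_le_sum_of_subset_of_nonneg
          · exact Finset.range_subset_range.mpr (Nat.lt_two_pow_self : n < 2 ^ n).le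
          · intro k _ _
            positivity
      _ = GG α n := rfl
      _ ≤ C := hC n

open Filter in
lemma omega_lim {x : ℝ} {α : ℕ} {A : ℝ}
    (hs : Summable (fun k => (2:ℝ) ^ (-(dickWeight α k : ℤ)) * walsh k x))
    (hT : Tendsto (fun m => SS α x m) atTop (nhds A)) :
    omegaDick α x = A - 1 := by
  set f : ℕ → ℝ := fun k => (2:ℝ) ^ (-(dickWeight α k : ℤ)) * walsh k x with hf
  have h0 : f 0 = 1 := by
    rw [hf]
    simp only [dw_zero, walsh_zero]
    norm_num
  have h1 : Tendsto (fun n => ∑ k ∈ Finset.range n, f k) atTop (nhds (∑' k, f k)) :=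
    hs.hasSum.tendsto_sum_nat
  have h2 : Tendsto (fun m => SS α x m) atTop (nhds (∑' k, f k)) :=
    h1.comp (tendsto_pow_atTop_atTop_of_one_lt one_lt_two)
  have hA : ∑' k, f k = A := tendsto_nhds_unique h2 hT
  have h3 := Summable.tsum_eq_zero_add hs
  have h4 : omegaDick α x = ∑' k, f (k + 1) := rfl
  rw [h4]
  rw [hA, h0] at h3
  linarith

lemma eight_pow (ℓ : ℕ) : ((2⁻¹:ℝ)^ℓ)^3 = (8⁻¹:ℝ)^ℓ := by
  rw [← pow_mul, show (8⁻¹:ℝ) = (2⁻¹:ℝ)^3 by norm_num, ← pow_mul, Nat.mul_comm]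

lemma summable_P3 {x : ℝ} :
    Summable (fun ℓ : ℕ => (binDigit (ℓ+1) x : ℝ) * ((2⁻¹:ℝ)^(ℓ+1))^3) := by
  have hg : Summable (fun ℓ : ℕ => ((2⁻¹:ℝ)^(ℓ+1))^3) := by
    have h8 : Summable (fun ℓ : ℕ => (8⁻¹:ℝ) * (8⁻¹:ℝ)^ℓ) :=
      (summable_geometric_of_lt_one (by norm_num) (by norm_num)).mul_left _
    refine h8.congr fun ℓ => ?_
    rw [eight_pow]
    ring
  refine Summable.of_nonneg_of_le (fun ℓ => by positivity) (fun ℓ => ?_) hg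
  have hd := binDigit_le_one (x := x) (ℓ+1)
  have h1 : (binDigit (ℓ+1) x : ℝ) ≤ 1 := by exact_mod_cast hd
  nlinarith [pow_nonneg (pow_nonneg (by norm_num : (0:ℝ) ≤ 2⁻¹) (ℓ+1)) 3]

open Filter in
lemma P3_tendsto {x : ℝ} :
    Tendsto (fun m => PP x m) atTop
      (nhds (∑' ℓ : ℕ, (binDigit (ℓ+1) x : ℝ) * ((2⁻¹:ℝ)^(ℓ+1))^3)) :=
  summable_P3.hasSum.tendsto_sum_nat

lemma Sser_eq {x : ℝ} :
    Sser x = 8/7 - 16 * (∑' ℓ : ℕ, (binDigit (ℓ+1) x : ℝ) * ((2⁻¹:ℝ)^(ℓ+1))^3) := by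
  unfold Sser
  have e : ∀ a : ℕ, walsh (2^a) x * (2:ℝ) ^ (-(3 * (a:ℤ)))
      = (8⁻¹:ℝ)^a - 16 * ((binDigit (a+1) x : ℝ) * ((2⁻¹:ℝ)^(a+1))^3) := by
    intro a
    rw [walsh_pm]
    have h1 : (2:ℝ) ^ (-(3 * (a:ℤ))) = (8⁻¹:ℝ)^a := by
      rw [show -(3 * (a:ℤ)) = -((3*a : ℕ) : ℤ) by push_cast; ring, zpow_neg_nat]
      rw [pow_mul]
      norm_num
    rw [h1, eight_pow]
    ring
  rw [tsum_congr e]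
  have hg : Summable (fun a : ℕ => (8⁻¹:ℝ)^a) :=
    summable_geometric_of_lt_one (by norm_num) (by norm_num)
  have hP := summable_P3 (x := x)
  rw [Summable.tsum_sub hg (hP.mul_left 16), tsum_geometric_of_lt_one (by norm_num) (by norm_num),
    tsum_mul_left]
  norm_num

open Filter

lemma ulim : Tendsto (fun m : ℕ => (2⁻¹:ℝ)^m) atTop (nhds 0) :=
  tendsto_pow_atTop_nhds_zero_of_lt_one (by norm_num) (by norm_num)

lemma X_tendsto {x : ℝ} (hx0 : 0 ≤ x) :
    Tendsto (fun m : ℕ => ((⌊(2:ℝ)^m * x⌋ : ℤ) : ℝ) * (2⁻¹:ℝ)^m) atTop (nhds x) := by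
  have hcancel : ∀ m : ℕ, (2:ℝ)^m * (2⁻¹:ℝ)^m = 1 := fun m => by rw [← mul_pow]; norm_num
  have hup : ∀ m : ℕ, ((⌊(2:ℝ)^m * x⌋ : ℤ) : ℝ) * (2⁻¹:ℝ)^m ≤ x := by
    intro m
    have h1 := Int.floor_le ((2:ℝ)^m * x)
    have h2 : (0:ℝ) < (2⁻¹:ℝ)^m := by positivity
    have h3 := hcancel m
    nlinarith
  have hlo : ∀ m : ℕ, x - (2⁻¹:ℝ)^m ≤ ((⌊(2:ℝ)^m * x⌋ : ℤ) : ℝ) * (2⁻¹:ℝ)^m := by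
    intro m
    have h1 := Int.lt_floor_add_one ((2:ℝ)^m * x)
    have h2 : (0:ℝ) < (2⁻¹:ℝ)^m := by positivity
    have h3 := hcancel m
    nlinarith
  have hg : Tendsto (fun m : ℕ => x - (2⁻¹:ℝ)^m) atTop (nhds x) := by
    have h0 : Tendsto (fun _ : ℕ => x) atTop (nhds x) := tendsto_const_nhds
    simpa using h0.sub ulim
  exact tendsto_of_tendsto_of_tendsto_of_le_of_le hg tendsto_const_nhds hlo hup

theorem stmt_11 (x : ℝ) (hx : x ∈ Set.Ico (0 : ℝ) 1) :
    (omegaDick 2 x = -1 - (betaFn x : ℝ) * x + 5 / 2 * (1 - tFn 1 x)) ∧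
    (omegaDick 3 x =
      -1 + (betaFn x : ℝ) * x ^ 2 - 5 * (1 - tFn 1 x) * x + 43 / 18 * (1 - tFn 2 x)) ∧
    (omegaDick 4 x =
      -1 - 2 / 3 * (betaFn x : ℝ) * x ^ 3 + 5 * (1 - tFn 1 x) * x ^ 2 -
        43 / 9 * (1 - tFn 2 x) * x + 701 / 294 * (1 - tFn 3 x) +
        (betaFn x : ℝ) * (Sser x / 48 - 1 / 42)) := by
  obtain ⟨hx0, hx1⟩ := hx
  have hsum2 : Summable (fun k => (2:ℝ) ^ (-(dickWeight 2 k : ℤ)) * walsh k x) :=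
    summable_dick 2 3 (fun m => by
      have := GG2 (m := m)
      nlinarith [pow_pos (show (0:ℝ) < 2⁻¹ by norm_num) (m+1), Nat.cast_nonneg (α := ℝ) m])
  have hsum3 : Summable (fun k => (2:ℝ) ^ (-(dickWeight 3 k : ℤ)) * walsh k x) :=
    summable_dick 3 4 (fun m => by
      have := GG3 (m := m)
      nlinarith [pow_pos (show (0:ℝ) < 2⁻¹ by norm_num) m])
  have hsum4 : Summable (fun k => (2:ℝ) ^ (-(dickWeight 4 k : ℤ)) * walsh k x) :=
    summable_dick 4 5 (fun m => by
      have := GG4 (m := m)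
      nlinarith [pow_pos (show (0:ℝ) < 2⁻¹ by norm_num) m])
  have hmu : Tendsto (fun m : ℕ => (m:ℝ) * (2⁻¹:ℝ)^m) atTop (nhds 0) := by
    have hs := summable_pow_mul_geometric_of_norm_lt_one (R := ℝ) 1
      (r := (2⁻¹:ℝ)) (by rw [Real.norm_eq_abs, abs_of_pos (by norm_num : (0:ℝ) < 2⁻¹)]; norm_num)
    have := hs.tendsto_atTop_zero
    simpa [pow_one] using this
  rcases eq_or_ne x 0 with rfl | hne
  · -- x = 0 case
    have hz : ∀ m : ℕ, ⌊(2:ℝ)^m * (0:ℝ)⌋ = 0 := fun m => by simp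
    have hform := fun m => phase1 (x := 0) le_rfl (by norm_num) m (hz m)
    have l2 : Tendsto (fun m => SS 2 0 m) atTop (nhds (5/2 - (3/2*0 + 1/2*0))) := by
      refine Tendsto.congr' ?_ (tendsto_const_nhds.sub ((ulim.const_mul (3/2)).add
        (hmu.const_mul (1/2))))
      filter_upwards with m
      rw [(hform m).2.1]
      push_cast
      ring
    have l3 : Tendsto (fun m => SS 3 0 m) atTop
        (nhds (43/18 - 5/2*0 + (10/9*(0*0) + 1/3*(0*0)))) := by
      refine Tendsto.congr' ?_ ((tendsto_const_nhds.sub (ulim.const_mul (5/2))).add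
        (((ulim.mul ulim).const_mul (10/9)).add ((hmu.mul ulim).const_mul (1/3))))
      filter_upwards with m
      rw [(hform m).2.2.1]
      push_cast
      ring
    have l4 : Tendsto (fun m => SS 4 0 m) atTop
        (nhds (701/294 - 43/18*0 + (5/3*(0*0) - (292/441*(0*(0*0)) + 4/21*(0*(0*0)))))) := by
      refine Tendsto.congr' ?_ ((tendsto_const_nhds.sub (ulim.const_mul (43/18))).add
        (((ulim.mul ulim).const_mul (5/3)).sub
          (((ulim.mul (ulim.mul ulim)).const_mul (292/441)).add
            ((hmu.mul (ulim.mul ulim)).const_mul (4/21)))))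
      filter_upwards with m
      rw [(hform m).2.2.2]
      push_cast
      ring
    have o2 := omega_lim hsum2 l2
    have o3 := omega_lim hsum3 l3
    have o4 := omega_lim hsum4 l4
    have hbeta : betaFn 0 = 0 := by unfold betaFn; rw [if_pos rfl]
    have htf : ∀ ν : ℕ, tFn ν 0 = 0 := fun ν => by unfold tFn; rw [if_pos rfl]
    refine ⟨?_, ?_, ?_⟩
    · rw [o2, hbeta]; simp only [htf]; norm_num
    · rw [o3, hbeta]; simp only [htf]; norm_num
    · rw [o4, hbeta]; simp only [htf]; norm_num
  · -- x ≠ 0 case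
    have hx0' : 0 < x := lt_of_le_of_ne hx0 (Ne.symm hne)
    set L := Real.logb 2 x with hLdef
    have hL : L < 0 := Real.logb_neg (by norm_num) hx0' hx1
    have hfloorL : ⌊L⌋ < 0 := by
      rw [show (0:ℤ) = ((0:ℤ)) by rfl, Int.floor_lt]
      exact_mod_cast hL
    set b : ℕ := (-⌊L⌋).toNat with hbdef
    have hbz : (b : ℤ) = -⌊L⌋ := Int.toNat_of_nonneg (by omega)
    have hb1 : 1 ≤ b := by omega
    have hfloorb : ⌊L⌋ = -(b:ℤ) := by omega
    have hpow_eq : (2:ℝ) ^ (⌊L⌋ : ℤ) = (2⁻¹:ℝ)^b := by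
      rw [hfloorb, zpow_neg_nat]
    have hrpow : (2:ℝ) ^ ((⌊L⌋ : ℤ) : ℝ) = (2:ℝ) ^ (⌊L⌋ : ℤ) := Real.rpow_intCast 2 ⌊L⌋
    have hlb : (2⁻¹:ℝ)^b ≤ x := by
      have r1 : (2:ℝ) ^ ((⌊L⌋ : ℤ) : ℝ) ≤ (2:ℝ) ^ L :=
        Real.rpow_le_rpow_of_exponent_le (by norm_num) (Int.floor_le L)
      rw [Real.rpow_logb (by norm_num) (by norm_num) hx0'] at r1
      rw [hrpow, hpow_eq] at r1
      exact r1
    have hub : x < 2 * (2⁻¹:ℝ)^b := by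
      have r2 : (2:ℝ) ^ L < (2:ℝ) ^ (((⌊L⌋ : ℤ) : ℝ) + 1) :=
        Real.rpow_lt_rpow_of_exponent_lt (by norm_num) (Int.lt_floor_add_one L)
      rw [Real.rpow_logb (by norm_num) (by norm_num) hx0'] at r2
      have : (2:ℝ) ^ (((⌊L⌋ : ℤ) : ℝ) + 1) = 2 * (2⁻¹:ℝ)^b := by
        rw [show (((⌊L⌋ : ℤ) : ℝ) + 1) = (((⌊L⌋ + 1 : ℤ)) : ℝ) by push_cast; ring,
          Real.rpow_intCast, zpow_add_one₀ (by norm_num : (2:ℝ) ≠ 0), hpow_eq]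
        ring
      rw [this] at r2
      exact r2
    have hbeta : betaFn x = (b : ℤ) := by
      unfold betaFn
      rw [if_neg hne, ← hLdef]
      omega
    have htf : ∀ ν : ℕ, tFn ν x = ((2⁻¹:ℝ)^b)^ν := by
      intro ν
      unfold tFn
      rw [if_neg hne, hbeta,
        show (-(ν:ℤ)) * (b:ℤ) = (-(b:ℤ)) * (ν:ℤ) by ring, zpow_mul, zpow_neg_nat,
        zpow_natCast]
    have hP2 := phase2 hx0 hx1 b hb1 hlb hub
    have hXl := X_tendsto (x := x) hx0
    set E : ℝ := (2⁻¹:ℝ)^b with hEdef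
    set CC : ℝ := ∑' ℓ : ℕ, (binDigit (ℓ+1) x : ℝ) * ((2⁻¹:ℝ)^(ℓ+1))^3 with hCCdef
    have hP3l : Tendsto (fun m => PP x m) atTop (nhds CC) := P3_tendsto
    set B : ℝ := (b : ℝ) with hBdef
    have l2 : Tendsto (fun m => SS 2 x m) atTop (nhds (5/2*(1-E) - B*x - B/2*0)) := by
      refine Tendsto.congr' ?_ ((tendsto_const_nhds.sub (hXl.const_mul B)).sub
        (ulim.const_mul (B/2)))
      rw [EventuallyEq, eventually_atTop]
      exact ⟨b, fun m hm => by rw [(hP2 m hm).2.1]⟩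
    have l3 : Tendsto (fun m => SS 3 x m) atTop
        (nhds (B*x^2 - 2*(5/2*(1-E))*x + B*(0*x) - (5/2*(1-E))*0 + B/3*0^2
          + 43/18*(1-E^2))) := by
      refine Tendsto.congr' ?_ (((((((hXl.pow 2).const_mul B).sub
        (hXl.const_mul (2*(5/2*(1-E))))).add
        ((ulim.mul hXl).const_mul B)).sub (ulim.const_mul (5/2*(1-E)))).add
        ((ulim.pow 2).const_mul (B/3))).add tendsto_const_nhds)
      rw [EventuallyEq, eventually_atTop]
      refine ⟨b, fun m hm => ?_⟩
      rw [(hP2 m hm).2.2.1]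
      ring
    have l4 : Tendsto (fun m => SS 4 x m) atTop
        (nhds (-(2*B/3)*x^3 + 2*(5/2*(1-E))*x^2 - 2*(43/18*(1-E^2))*x - B/3*CC
          - B*(0*x^2) + 2*(5/2*(1-E))*(0*x) - (43/18*(1-E^2))*0 - (2*B/3)*(0^2*x)
          + (2*(5/2*(1-E))/3)*0^2 - (4*B/21)*0^3 + 701/294*(1-E^3))) := by
      refine Tendsto.congr' ?_ ((((((((((((hXl.pow 3).const_mul (-(2*B/3))).add
        ((hXl.pow 2).const_mul (2*(5/2*(1-E))))).sub
        (hXl.const_mul (2*(43/18*(1-E^2))))).sub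
        (hP3l.const_mul (B/3))).sub
        ((ulim.mul (hXl.pow 2)).const_mul B)).add
        ((ulim.mul hXl).const_mul (2*(5/2*(1-E))))).sub
        (ulim.const_mul (43/18*(1-E^2)))).sub
        (((ulim.pow 2).mul hXl).const_mul (2*B/3))).add
        ((ulim.pow 2).const_mul (2*(5/2*(1-E))/3))).sub
        ((ulim.pow 3).const_mul (4*B/21))).add tendsto_const_nhds)
      rw [EventuallyEq, eventually_atTop]
      refine ⟨b, fun m hm => ?_⟩
      rw [(hP2 m hm).2.2.2]
      ring
    have o2 := omega_lim hsum2 l2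
    have o3 := omega_lim hsum3 l3
    have o4 := omega_lim hsum4 l4
    have hbcast : ((betaFn x : ℤ) : ℝ) = B := by rw [hbeta]; push_cast [hBdef]; ring
    have hSser : Sser x = 8/7 - 16 * CC := Sser_eq
    refine ⟨?_, ?_, ?_⟩
    · rw [o2, hbcast, htf 1]
      ring
    · rw [o3, hbcast, htf 1, htf 2]
      ring
    · rw [o4, hbcast, htf 1, htf 2, htf 3, hSser]
      ring
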